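/- Let α ∈ (1,2). Then the Lubich coefficients satisfy: q_0^α = (3/2)^α > 0; q_1^α = −(3/2)^α·(4α/3) < 0; q_2^α = (3/2)^α·α(8α−5)/9 > 0; q_3^α = (3/2)^α·4α(α−1)(7−8α)/81 < 0; q_4^α = (3/2)^α·α(α−1)(64α²−176α+123)/486 > 0; and q_5^α = (3/2)^α·2α(α−1)(2−α)(64α²−208α+183)/3645 > 0. -/

import Mathlib

open scoped BigOperators

/-- The coefficients `g_k^α = (-1)^k * binom(α, k)`, defined recursively. -/
noncomputable def gL (α : ℝ) : ℕ → ℝ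
  | 0 => 1
  | (k + 1) => (1 - (α + 1) / ((k : ℝ) + 1)) * gL α k

/-- The Lubich coefficients `q_k^α = (3/2)^α * Σ_{m=0}^{k} 3^{-m} g_m^α g_{k-m}^α`
for `k ≥ 0`, and `q_k^α = 0` for `k < 0`. -/
noncomputable def qL (α : ℝ) (k : ℤ) : ℝ :=
  if 0 ≤ k then
    (3 / 2 : ℝ) ^ α *
      ∑ m ∈ Finset.range (k.toNat + 1), (3 : ℝ) ^ (-(m : ℤ)) * gL α m * gL α (k.toNat - m)
  else 0

theorem stmt0 (α : ℝ) (h1 : 1 < α) (h2 : α < 2) :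
    (qL α 0 = (3 / 2 : ℝ) ^ α ∧ 0 < qL α 0) ∧
    (qL α 1 = -((3 / 2 : ℝ) ^ α * (4 * α / 3)) ∧ qL α 1 < 0) ∧
    (qL α 2 = (3 / 2 : ℝ) ^ α * (α * (8 * α - 5) / 9) ∧ 0 < qL α 2) ∧
    (qL α 3 = (3 / 2 : ℝ) ^ α * (4 * α * (α - 1) * (7 - 8 * α) / 81) ∧ qL α 3 < 0) ∧
    (qL α 4 = (3 / 2 : ℝ) ^ α * (α * (α - 1) * (64 * α ^ 2 - 176 * α + 123) / 486) ∧
      0 < qL α 4) ∧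
    (qL α 5 = (3 / 2 : ℝ) ^ α *
        (2 * α * (α - 1) * (2 - α) * (64 * α ^ 2 - 208 * α + 183) / 3645) ∧
      0 < qL α 5) := by
  have hC : (0:ℝ) < (3 / 2 : ℝ) ^ α := Real.rpow_pos_of_pos (by norm_num) α
  have ha : (0:ℝ) < α := by linarith
  have hb : (0:ℝ) < α - 1 := by linarith
  have hc : (0:ℝ) < 2 - α := by linarith
  have e0 : qL α 0 = (3 / 2 : ℝ) ^ α := by
    show (3/2:ℝ)^α * _ = _
    rw [show (0:ℤ).toNat = 0 from rfl]
    simp only [Finset.sum_range_succ, Finset.sum_range_zero, gL, show gL α 0 = 1 from rfl]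
    norm_num
  have e1 : qL α 1 = -((3 / 2 : ℝ) ^ α * (4 * α / 3)) := by
    show (3/2:ℝ)^α * _ = _
    rw [show (1:ℤ).toNat = 1 from rfl]
    simp only [Finset.sum_range_succ, Finset.sum_range_zero, gL, show gL α 0 = 1 from rfl]
    norm_num [zpow_neg]
    ring
  have e2 : qL α 2 = (3 / 2 : ℝ) ^ α * (α * (8 * α - 5) / 9) := by
    show (3/2:ℝ)^α * _ = _
    rw [show (2:ℤ).toNat = 2 from rfl]
    simp only [Finset.sum_range_succ, Finset.sum_range_zero, gL, show gL α 0 = 1 from rfl]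
    norm_num [zpow_neg]
    left; ring
  have e3 : qL α 3 = (3 / 2 : ℝ) ^ α * (4 * α * (α - 1) * (7 - 8 * α) / 81) := by
    show (3/2:ℝ)^α * _ = _
    rw [show (3:ℤ).toNat = 3 from rfl]
    simp only [Finset.sum_range_succ, Finset.sum_range_zero, gL, show gL α 0 = 1 from rfl]
    norm_num [zpow_neg]
    left; ring
  have e4 : qL α 4 = (3 / 2 : ℝ) ^ α * (α * (α - 1) * (64 * α ^ 2 - 176 * α + 123) / 486) := by
    show (3/2:ℝ)^α * _ = _
    rw [show (4:ℤ).toNat = 4 from rfl]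
    simp only [Finset.sum_range_succ, Finset.sum_range_zero, gL, show gL α 0 = 1 from rfl]
    norm_num [zpow_neg]
    left; ring
  have e5 : qL α 5 = (3 / 2 : ℝ) ^ α *
      (2 * α * (α - 1) * (2 - α) * (64 * α ^ 2 - 208 * α + 183) / 3645) := by
    show (3/2:ℝ)^α * _ = _
    rw [show (5:ℤ).toNat = 5 from rfl]
    simp only [Finset.sum_range_succ, Finset.sum_range_zero, gL, show gL α 0 = 1 from rfl]
    norm_num [zpow_neg]
    left; ring
  refine ⟨⟨e0, e0 ▸ hC⟩, ⟨e1, ?_⟩, ⟨e2, ?_⟩, ⟨e3, ?_⟩, ⟨e4, ?_⟩, ⟨e5, ?_⟩⟩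
  · rw [e1]
    have : 0 < (3 / 2 : ℝ) ^ α * (4 * α / 3) := mul_pos hC (by linarith)
    linarith
  · rw [e2]; exact mul_pos hC (by nlinarith)
  · rw [e3]
    have hx : 4 * α * (α - 1) * (7 - 8 * α) / 81 < 0 := by
      have := mul_pos (mul_pos ha hb) (show (0:ℝ) < 8 * α - 7 by linarith)
      nlinarith
    exact mul_neg_of_pos_of_neg hC hx
  · rw [e4]
    refine mul_pos hC ?_
    have := mul_pos ha hb
    nlinarith [sq_nonneg (8 * α - 11)]
  · rw [e5]
    refine mul_pos hC ?_
    have h3 := mul_pos (mul_pos ha hb) hc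
    nlinarith [sq_nonneg (8 * α - 13), mul_pos h3 (show (0:ℝ) < (8*α-13)^2 + 14 by positivity)]
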